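/- Let p_1,...,p_t be monomial prime ideals in R = K[x_1,...,x_n] with pairwise disjoint sets of variable generators, all of the same height, and let a_1,...,a_t be positive integers. Then the product ideal I = p_1^{a_1} p_2^{a_2} ··· p_t^{a_t} is an unmixed polymatroidal ideal of degree Σ a_i. -/

import Mathlib

noncomputable section
open MvPolynomial

variable (K : Type*) [Field K] (n : ℕ)

/-- Total degree of an exponent vector. -/
def expDeg (m : Fin n →₀ ℕ) : ℕ := m.sum fun _ e => e

/-- The minimal monomial generators of a monomial ideal, encoded by their
exponent vectors: monomials in `I` that are minimal under divisibility. -/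
def minGens (I : Ideal (MvPolynomial (Fin n) K)) : Set (Fin n →₀ ℕ) :=
  {m | (monomial m (1 : K)) ∈ I ∧
    ∀ m' : Fin n →₀ ℕ, (monomial m' (1 : K)) ∈ I → m' ≤ m → m' = m}

/-- A monomial ideal: an ideal generated by monomials. -/
def IsMonomialIdeal (I : Ideal (MvPolynomial (Fin n) K)) : Prop :=
  ∃ S : Set (Fin n →₀ ℕ), I = Ideal.span ((fun m => monomial m (1 : K)) '' S)

/-- A polymatroidal ideal of degree `d`: a monomial ideal all of whose minimal
generators have degree `d`, satisfying the exchange property. -/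
def IsPolymatroidal (I : Ideal (MvPolynomial (Fin n) K)) (d : ℕ) : Prop :=
  IsMonomialIdeal K n I ∧
  (∀ m ∈ minGens K n I, expDeg n m = d) ∧
  (∀ u ∈ minGens K n I, ∀ v ∈ minGens K n I, ∀ i : Fin n, v i < u i →
    ∃ j : Fin n, u j < v j ∧
      (u - Finsupp.single i 1 + Finsupp.single j 1) ∈ minGens K n I)

/-- A matroidal ideal: a squarefree polymatroidal ideal. -/
def IsMatroidal (I : Ideal (MvPolynomial (Fin n) K)) (d : ℕ) : Prop :=
  IsPolymatroidal K n I d ∧ ∀ m ∈ minGens K n I, ∀ i, m i ≤ 1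

/-- The support of a monomial ideal: variables dividing some minimal generator. -/
def suppI (I : Ideal (MvPolynomial (Fin n) K)) : Set (Fin n) :=
  {i | ∃ m ∈ minGens K n I, m i ≠ 0}

/-- The colon ideal `(I : x_i)`. -/
def colonVar (I : Ideal (MvPolynomial (Fin n) K)) (i : Fin n) :
    Ideal (MvPolynomial (Fin n) K) :=
  Submodule.colon I ((Ideal.span {X i} : Ideal (MvPolynomial (Fin n) K)) : Set (MvPolynomial (Fin n) K))

/-- The height of an ideal: infimum of heights of primes containing it. -/
def htIdeal (I : Ideal (MvPolynomial (Fin n) K)) : ℕ∞ :=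
  ⨅ (p : PrimeSpectrum (MvPolynomial (Fin n) K)) (_ : I ≤ p.asIdeal),
    Order.height p

/-- An ideal is unmixed if all associated primes of `R/I` have the same height. -/
def IsUnmixed (I : Ideal (MvPolynomial (Fin n) K)) : Prop :=
  ∀ p ∈ associatedPrimes (MvPolynomial (Fin n) K) (MvPolynomial (Fin n) K ⧸ I),
  ∀ q ∈ associatedPrimes (MvPolynomial (Fin n) K) (MvPolynomial (Fin n) K ⧸ I),
    htIdeal K n p = htIdeal K n q

/-- The graded maximal ideal `(x_1, …, x_n)`. -/
def maxIdeal : Ideal (MvPolynomial (Fin n) K) :=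
  Ideal.span (Set.range (X : Fin n → MvPolynomial (Fin n) K))

/-- The monomial prime ideal generated by the variables in `s`. -/
def primeOf (s : Finset (Fin n)) : Ideal (MvPolynomial (Fin n) K) :=
  Ideal.span ((fun i => (X i : MvPolynomial (Fin n) K)) '' s)

/-- The squarefree Veronese ideal of degree `d`. -/
def sqVeronese (d : ℕ) : Ideal (MvPolynomial (Fin n) K) :=
  Ideal.span {f | ∃ e : Finset (Fin n), e.card = d ∧ f = ∏ i ∈ e, X i}

/-- The variables belonging to an ideal (the variable generators of a
monomial prime). -/
def varsOf (p : Ideal (MvPolynomial (Fin n) K)) : Set (Fin n) :=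
  {i | (X i : MvPolynomial (Fin n) K) ∈ p}

/-- `I` is connected in codimension one: any two distinct minimal primes are
linked by a chain of minimal primes in which consecutive primes generate an
ideal on `height I + 1` variables. -/
def ConnCodimOne (I : Ideal (MvPolynomial (Fin n) K)) : Prop :=
  ∀ p ∈ I.minimalPrimes, ∀ q ∈ I.minimalPrimes, p ≠ q →
    ∃ (r : ℕ) (c : Fin (r + 1) → Ideal (MvPolynomial (Fin n) K)),
      (∀ i, c i ∈ I.minimalPrimes) ∧ c 0 = p ∧ c (Fin.last r) = q ∧
      ∀ i : Fin r,
        ((varsOf K n (c i.castSucc ⊔ c i.succ)).ncard : ℕ∞) = htIdeal K n I + 1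

/-- `R/I` is Cohen–Macaulay: there is a regular sequence on `R/I` inside the
graded maximal ideal whose length equals the Krull dimension of `R/I`. -/
def QuotientCM (I : Ideal (MvPolynomial (Fin n) K)) : Prop :=
  ∃ rs : List (MvPolynomial (Fin n) K),
    (∀ r ∈ rs, r ∈ maxIdeal K n) ∧
    RingTheory.Sequence.IsRegular (MvPolynomial (Fin n) K ⧸ I) rs ∧
    ((rs.length : ℕ∞) : WithBot ℕ∞) = ringKrullDim (MvPolynomial (Fin n) K ⧸ I)

namespace P17
variable {K n}

def degB (W : Finset (Fin n)) (m : Fin n →₀ ℕ) : ℕ := ∑ j ∈ W, m j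

lemma degB_add (W : Finset (Fin n)) (m m' : Fin n →₀ ℕ) :
    degB W (m + m') = degB W m + degB W m' := by
  simp [degB, Finset.sum_add_distrib]

lemma degB_single (W : Finset (Fin n)) (i : Fin n) :
    degB W (Finsupp.single i 1) = if i ∈ W then 1 else 0 := by
  classical
  simp [degB, Finsupp.single_apply]

def Jpow (W : Finset (Fin n)) (a : ℕ) : Ideal (MvPolynomial (Fin n) K) where
  carrier := {f | ∀ m ∈ f.support, a ≤ degB W m}
  zero_mem' := by simp
  add_mem' := by
    classical
    intro f g hf hg m hm
    rcases Finset.mem_union.1 (Finsupp.support_add hm) with h | h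
    · exact hf m h
    · exact hg m h
  smul_mem' := by
    classical
    intro c f hf m hm
    rw [smul_eq_mul] at hm
    obtain ⟨m1, hm1, m2, hm2, rfl⟩ := Finset.mem_add.1 (MvPolynomial.support_mul c f hm)
    rw [degB_add]
    exact le_add_of_le_right (hf m2 hm2)

lemma mul_mem_Jpow {W : Finset (Fin n)} {a b : ℕ} {f g : MvPolynomial (Fin n) K}
    (hf : f ∈ Jpow W a) (hg : g ∈ Jpow W b) : f * g ∈ Jpow W (a + b) := by
  classical
  intro m hm
  obtain ⟨m1, hm1, m2, hm2, rfl⟩ := Finset.mem_add.1 (MvPolynomial.support_mul f g hm)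
  rw [degB_add]
  exact add_le_add (hf m1 hm1) (hg m2 hm2)

lemma primeOf_le_Jpow (W : Finset (Fin n)) : primeOf K n W ≤ Jpow W 1 := by
  classical
  rw [primeOf, Ideal.span_le]
  rintro _ ⟨i, hi, rfl⟩ m hm
  rw [MvPolynomial.support_X] at hm
  rw [Finset.mem_singleton] at hm
  subst hm
  simp [degB_single, Finset.mem_coe.1 hi]

lemma pow_le_Jpow (W : Finset (Fin n)) (a : ℕ) : (primeOf K n W) ^ a ≤ Jpow W a := by
  induction a with
  | zero => intro f _ m _; exact Nat.zero_le _
  | succ a ih =>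
      rw [pow_succ, Ideal.mul_le]
      intro r hr s hs
      exact mul_mem_Jpow (ih hr) (primeOf_le_Jpow W hs)

lemma monomial_mem_pow {W : Finset (Fin n)} {a : ℕ} {m : Fin n →₀ ℕ} (c : K)
    (h : a ≤ degB W m) : monomial m c ∈ (primeOf K n W) ^ a := by
  classical
  induction a generalizing m with
  | zero => simp
  | succ a ih =>
      have hpos : 0 < degB W m := lt_of_lt_of_le (Nat.succ_pos a) h
      have : ∃ j ∈ W, 0 < m j := by
        by_contra hc
        push_neg at hc
        have : degB W m = 0 := Finset.sum_eq_zero fun j hj => Nat.le_zero.1 (hc j hj)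
        omega
      obtain ⟨j, hjW, hj⟩ := this
      have hle : Finsupp.single j 1 ≤ m := Finsupp.single_le_iff.2 hj
      have key : degB W m = degB W (m - Finsupp.single j 1) + 1 := by
        have : (m - Finsupp.single j 1) + Finsupp.single j 1 = m := tsub_add_cancel_of_le hle
        conv_lhs => rw [← this]
        rw [degB_add, degB_single, if_pos hjW]
      have hmem : monomial (m - Finsupp.single j 1) c ∈ (primeOf K n W) ^ a := by
        apply ih; omega
      have hX : (X j : MvPolynomial (Fin n) K) ∈ primeOf K n W :=
        Ideal.subset_span ⟨j, hjW, rfl⟩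
      have : monomial m c = monomial (m - Finsupp.single j 1) c * X j := by
        rw [X, monomial_mul, tsub_add_cancel_of_le hle, mul_one]
      rw [this, pow_succ]
      exact Ideal.mul_mem_mul hmem hX

lemma mem_pow_iff {W : Finset (Fin n)} {a : ℕ} {f : MvPolynomial (Fin n) K} :
    f ∈ (primeOf K n W) ^ a ↔ ∀ m ∈ f.support, a ≤ degB W m := by
  constructor
  · exact fun h => pow_le_Jpow W a h
  · intro h
    rw [← support_sum_monomial_coeff f]
    exact Ideal.sum_mem _ fun m hm => monomial_mem_pow _ (h m hm)

lemma X_mem_primeOf_iff {W : Finset (Fin n)} {i : Fin n} :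
    (X i : MvPolynomial (Fin n) K) ∈ primeOf K n W ↔ i ∈ W := by
  classical
  constructor
  · intro h
    have h1 : (X i : MvPolynomial (Fin n) K) ∈ (primeOf K n W) ^ 1 := by rwa [pow_one]
    have := mem_pow_iff.1 h1 (Finsupp.single i 1) (by rw [MvPolynomial.support_X]; simp)
    rw [degB_single] at this
    by_contra hc
    rw [if_neg hc] at this
    omega
  · intro h; exact Ideal.subset_span ⟨i, h, rfl⟩

variable {K : Type*} [Field K] {n : ℕ}

lemma exists_trunc (W : Finset (Fin n)) (m : Fin n →₀ ℕ) (a : ℕ) (h : a ≤ degB W m) :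
    ∃ μ : Fin n →₀ ℕ, μ ≤ m ∧ (∀ j, j ∉ W → μ j = 0) ∧ degB W μ = a := by
  classical
  induction a with
  | zero => exact ⟨0, zero_le, fun j _ => rfl, by simp [degB]⟩
  | succ a ih =>
      obtain ⟨μ, hle, hout, hdeg⟩ := ih (by omega)
      have : ∃ j ∈ W, μ j < m j := by
        by_contra hc
        push_neg at hc
        have : degB W m ≤ degB W μ := Finset.sum_le_sum fun j hj => hc j hj
        omega
      obtain ⟨j, hjW, hj⟩ := this
      refine ⟨μ + Finsupp.single j 1, ?_, ?_, ?_⟩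
      · rw [Finsupp.le_def]
        intro l
        rw [Finsupp.add_apply, Finsupp.single_apply]
        by_cases hl : j = l
        · subst hl; simpa using hj
        · simpa [hl] using Finsupp.le_def.1 hle l
      · intro l hl
        have hne : j ≠ l := fun h => hl (h ▸ hjW)
        simp [Finsupp.single_apply, hout l hl, hne]
      · rw [degB_add, degB_single, if_pos hjW, hdeg]

variable {t : ℕ} {V : Fin t → Finset (Fin n)} {a : Fin t → ℕ}

section
variable (hdisj : ∀ i j, i ≠ j → Disjoint (V i) (V j))
include hdisj

lemma sum_apply_le {μ : Fin t → (Fin n →₀ ℕ)} {m : Fin n →₀ ℕ}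
    (hout : ∀ i, ∀ j, j ∉ V i → μ i j = 0) (hle : ∀ i, μ i ≤ m) :
    (∑ i, μ i) ≤ m := by
  classical
  rw [Finsupp.le_def]
  intro j
  rw [Finsupp.finset_sum_apply]
  by_cases hex : ∃ k, j ∈ V k
  · obtain ⟨k, hk⟩ := hex
    rw [Finset.sum_eq_single_of_mem k (Finset.mem_univ k)]
    · exact Finsupp.le_def.1 (hle k) j
    · intro i _ hik
      exact hout i j (fun hji => (Finset.disjoint_left.1 (hdisj i k hik) hji) hk)
  · push_neg at hex
    rw [Finset.sum_eq_zero fun i _ => hout i j (hex i)]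
    exact Nat.zero_le _

lemma degB_sum_eq {μ : Fin t → (Fin n →₀ ℕ)}
    (hout : ∀ i, ∀ j, j ∉ V i → μ i j = 0) (k : Fin t) :
    degB (V k) (∑ i, μ i) = degB (V k) (μ k) := by
  classical
  have h1 : degB (V k) (∑ i, μ i) = ∑ i, degB (V k) (μ i) := by
    simp only [degB, Finsupp.finset_sum_apply]
    rw [Finset.sum_comm]
  rw [h1, Finset.sum_eq_single_of_mem k (Finset.mem_univ k)]
  intro i _ hik
  exact Finset.sum_eq_zero fun j hj =>
    hout i j (fun hji => (Finset.disjoint_left.1 (hdisj i k hik) hji) hj)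

end

lemma prod_monomial_one (μ : Fin t → (Fin n →₀ ℕ)) :
    (∏ i, monomial (μ i) (1 : K)) = monomial (∑ i, μ i) 1 := by
  classical
  induction (Finset.univ : Finset (Fin t)) using Finset.induction with
  | empty => simp
  | insert _ _ hx ih =>
      rw [Finset.prod_insert hx, Finset.sum_insert hx, ih, monomial_mul, one_mul]

lemma prod_le_pow (k : Fin t) :
    (∏ i, primeOf K n (V i) ^ a i) ≤ primeOf K n (V k) ^ a k :=
  le_trans Ideal.prod_le_inf (Finset.inf_le (Finset.mem_univ k))

lemma mem_prod_iff (hdisj : ∀ i j, i ≠ j → Disjoint (V i) (V j))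
    {f : MvPolynomial (Fin n) K} :
    f ∈ (∏ i, primeOf K n (V i) ^ a i) ↔
      ∀ m ∈ f.support, ∀ i, a i ≤ degB (V i) m := by
  classical
  constructor
  · intro h m hm i
    exact mem_pow_iff.1 (prod_le_pow i h) m hm
  · intro h
    rw [← support_sum_monomial_coeff f]
    refine Ideal.sum_mem _ fun m hm => ?_
    -- build truncations
    have hμ : ∀ i : Fin t, ∃ μ : Fin n →₀ ℕ,
        μ ≤ m ∧ (∀ j, j ∉ V i → μ j = 0) ∧ degB (V i) μ = a i :=
      fun i => exists_trunc (V i) m (a i) (h m hm i)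
    choose μ hle hout hdeg using hμ
    have hsle : (∑ i, μ i) ≤ m := sum_apply_le hdisj hout hle
    have hprod : (∏ i, monomial (μ i) (1 : K)) ∈ (∏ i, primeOf K n (V i) ^ a i) :=
      Ideal.prod_mem_prod fun i _ => monomial_mem_pow 1 (le_of_eq (hdeg i).symm)
    have heq : monomial m (coeff m f)
        = monomial (m - ∑ i, μ i) (coeff m f) * ∏ i, monomial (μ i) (1 : K) := by
      rw [prod_monomial_one, monomial_mul, tsub_add_cancel_of_le hsle, mul_one]
    rw [heq]
    exact Ideal.mul_mem_left _ _ hprod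

variable {K : Type*} [Field K] {n : ℕ}
variable {t : ℕ} {V : Fin t → Finset (Fin n)} {a : Fin t → ℕ}

lemma monomial_one_mem_iff (hdisj : ∀ i j, i ≠ j → Disjoint (V i) (V j))
    {m : Fin n →₀ ℕ} :
    monomial m (1 : K) ∈ (∏ i, primeOf K n (V i) ^ a i) ↔
      ∀ i, a i ≤ degB (V i) m := by
  classical
  rw [mem_prod_iff hdisj, support_monomial, if_neg (one_ne_zero (α := K))]
  simp

lemma minGens_iff (hdisj : ∀ i j, i ≠ j → Disjoint (V i) (V j)) {m : Fin n →₀ ℕ} :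
    m ∈ minGens K n (∏ i, primeOf K n (V i) ^ a i) ↔
      (∀ i, degB (V i) m = a i) ∧ (∀ j, (∀ i, j ∉ V i) → m j = 0) := by
  classical
  constructor
  · rintro ⟨hmem, hmin⟩
    have hge := (monomial_one_mem_iff hdisj).1 hmem
    choose μ hle hout hdeg using fun i => exists_trunc (V i) m (a i) (hge i)
    have hs : monomial (∑ i, μ i) (1 : K) ∈ (∏ i, primeOf K n (V i) ^ a i) :=
      (monomial_one_mem_iff hdisj).2 fun i => by
        rw [degB_sum_eq hdisj hout, hdeg i]
    have heq : (∑ i, μ i) = m := hmin _ hs (sum_apply_le hdisj hout hle)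
    constructor
    · intro i
      rw [← heq, degB_sum_eq hdisj hout, hdeg i]
    · intro j hj
      rw [← heq, Finsupp.finset_sum_apply]
      exact Finset.sum_eq_zero fun i _ => hout i j (hj i)
  · rintro ⟨hdeg, hout⟩
    refine ⟨(monomial_one_mem_iff hdisj).2 fun i => (hdeg i).ge, ?_⟩
    intro m' hm' hle
    have hge' := (monomial_one_mem_iff hdisj).1 hm'
    ext j
    by_cases hex : ∃ i, j ∈ V i
    · obtain ⟨i, hi⟩ := hex
      have hsum : ∑ l ∈ V i, m' l = ∑ l ∈ V i, m l := by
        have h1 : ∑ l ∈ V i, m' l ≤ ∑ l ∈ V i, m l :=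
          Finset.sum_le_sum fun l _ => Finsupp.le_def.1 hle l
        have h2 : a i ≤ ∑ l ∈ V i, m' l := hge' i
        have h3 : ∑ l ∈ V i, m l = a i := hdeg i
        omega
      exact (Finset.sum_eq_sum_iff_of_le
        (fun l _ => Finsupp.le_def.1 hle l)).1 hsum j hi
    · push_neg at hex
      have h0 : m j = 0 := hout j hex
      have := Finsupp.le_def.1 hle j
      omega

lemma minGens_deg (hdisj : ∀ i j, i ≠ j → Disjoint (V i) (V j)) {m : Fin n →₀ ℕ}
    (hm : m ∈ minGens K n (∏ i, primeOf K n (V i) ^ a i)) :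
    expDeg n m = ∑ i, a i := by
  classical
  obtain ⟨hdeg, hout⟩ := (minGens_iff hdisj).1 hm
  have hsub : m.support ⊆ Finset.univ.biUnion V := by
    intro j hj
    rw [Finset.mem_biUnion]
    by_contra hc
    push_neg at hc
    exact Finsupp.mem_support_iff.1 hj (hout j fun i => hc i (Finset.mem_univ i))
  have h1 : expDeg n m = ∑ j ∈ Finset.univ.biUnion V, m j := by
    rw [expDeg, Finsupp.sum]
    exact Finset.sum_subset hsub fun x _ hx => Finsupp.notMem_support_iff.1 hx
  rw [h1, Finset.sum_biUnion (fun i _ j _ hij => hdisj i j hij)]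
  exact Finset.sum_congr rfl fun i _ => hdeg i

lemma exchange (hdisj : ∀ i j, i ≠ j → Disjoint (V i) (V j)) (ha : ∀ i, 1 ≤ a i)
    {u v : Fin n →₀ ℕ}
    (hu : u ∈ minGens K n (∏ i, primeOf K n (V i) ^ a i))
    (hv : v ∈ minGens K n (∏ i, primeOf K n (V i) ^ a i))
    {i : Fin n} (hvi : v i < u i) :
    ∃ j : Fin n, u j < v j ∧
      (u - Finsupp.single i 1 + Finsupp.single j 1) ∈
        minGens K n (∏ i, primeOf K n (V i) ^ a i) := by
  classical
  obtain ⟨hudeg, huout⟩ := (minGens_iff hdisj).1 hu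
  obtain ⟨hvdeg, hvout⟩ := (minGens_iff hdisj).1 hv
  have hk : ∃ k, i ∈ V k := by
    by_contra hc
    push_neg at hc
    have := huout i hc
    omega
  obtain ⟨k, hik⟩ := hk
  have hj : ∃ j ∈ V k, u j < v j := by
    by_contra hc
    push_neg at hc
    have hlt : ∑ l ∈ V k, v l < ∑ l ∈ V k, u l :=
      Finset.sum_lt_sum (fun l hl => hc l hl) ⟨i, hik, hvi⟩
    have h1 : degB (V k) v = a k := hvdeg k
    have h2 : degB (V k) u = a k := hudeg k
    rw [degB] at h1 h2
    omega
  obtain ⟨j, hjk, hjlt⟩ := hj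
  have hij : i ≠ j := fun h => by subst h; omega
  have hui : 1 ≤ u i := by omega
  have hsub : (u - Finsupp.single i 1) + Finsupp.single i 1 = u :=
    tsub_add_cancel_of_le (Finsupp.single_le_iff.2 hui)
  have hdegu : ∀ q : Fin t, degB (V q) u
      = degB (V q) (u - Finsupp.single i 1) + (if i ∈ V q then 1 else 0) := by
    intro q
    conv_lhs => rw [← hsub]
    rw [degB_add, degB_single]
  have hdegw : ∀ q : Fin t,
      degB (V q) (u - Finsupp.single i 1 + Finsupp.single j 1)
      = degB (V q) (u - Finsupp.single i 1) + (if j ∈ V q then 1 else 0) := by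
    intro q
    rw [degB_add, degB_single]
  refine ⟨j, hjlt, (minGens_iff hdisj).2 ⟨?_, ?_⟩⟩
  · intro q
    by_cases hq : q = k
    · subst hq
      have := hdegu q
      rw [if_pos hik] at this
      rw [hdegw q, if_pos hjk]
      have := hudeg q
      omega
    · have hiq : i ∉ V q := fun h =>
        Finset.disjoint_left.1 (hdisj q k hq) h hik
      have hjq : j ∉ V q := fun h =>
        Finset.disjoint_left.1 (hdisj q k hq) h hjk
      have h1 := hdegu q
      rw [if_neg hiq] at h1
      rw [hdegw q, if_neg hjq]
      have := hudeg q
      omega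
  · intro l hl
    have hul : u l = 0 := huout l hl
    have hjl : j ≠ l := fun h => hl k (h ▸ hjk)
    rw [Finsupp.add_apply, Finsupp.tsub_apply, Finsupp.single_apply,
      Finsupp.single_apply, hul, if_neg hjl]
    simp

lemma isMonomialIdeal (hdisj : ∀ i j, i ≠ j → Disjoint (V i) (V j)) :
    IsMonomialIdeal K n (∏ i, primeOf K n (V i) ^ a i) := by
  classical
  refine ⟨{m | ∀ i, a i ≤ degB (V i) m}, le_antisymm ?_ ?_⟩
  · intro f hf
    rw [← support_sum_monomial_coeff f]
    refine Submodule.sum_mem _ fun m hm => ?_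
    have : monomial m (coeff m f) = C (coeff m f) * monomial m (1 : K) := by
      rw [C_mul_monomial, mul_one]
    rw [this]
    exact Ideal.mul_mem_left _ _ (Ideal.subset_span
      ⟨m, fun i => mem_prod_iff hdisj |>.1 hf m hm i, rfl⟩)
  · rw [Ideal.span_le]
    rintro _ ⟨m, hm, rfl⟩
    exact (monomial_one_mem_iff hdisj).2 hm

variable {K : Type*} [Field K] {n : ℕ}

/-- Weight-grading homomorphism for block `W`. -/
def Phi (W : Finset (Fin n)) :
    MvPolynomial (Fin n) K →ₐ[K] Polynomial (MvPolynomial (Fin n) K) :=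
  aeval fun j => if j ∈ W then Polynomial.C (X j) * Polynomial.X else Polynomial.C (X j)

lemma Phi_monomial (W : Finset (Fin n)) (m : Fin n →₀ ℕ) (c : K) :
    Phi W (monomial m c)
      = Polynomial.C (monomial m c) * Polynomial.X ^ degB W m := by
  classical
  rw [Phi, aeval_monomial]
  have hfac : ∀ i ∈ m.support,
      (if i ∈ W then Polynomial.C (X i : MvPolynomial (Fin n) K) * Polynomial.X
        else Polynomial.C (X i)) ^ m i
      = Polynomial.C ((X i : MvPolynomial (Fin n) K) ^ m i)
          * Polynomial.X ^ (if i ∈ W then m i else 0) := by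
    intro i _
    by_cases hiW : i ∈ W
    · rw [if_pos hiW, if_pos hiW, mul_pow, Polynomial.C_pow]
    · rw [if_neg hiW, if_neg hiW, Polynomial.C_pow, pow_zero, mul_one]
  have hdeg : ∑ i ∈ m.support, (if i ∈ W then m i else 0) = degB W m := by
    rw [Finset.sum_ite_mem, degB,
      show m.support ∩ W = W ∩ m.support from Finset.inter_comm _ _]
    refine Finset.sum_subset Finset.inter_subset_left fun x hxW hx => ?_
    simp only [Finset.mem_inter, not_and] at hx
    exact Finsupp.notMem_support_iff.1 (hx hxW)
  rw [Finsupp.prod, Finset.prod_congr rfl hfac, Finset.prod_mul_distrib,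
    ← map_prod, Finset.prod_pow_eq_pow_sum, hdeg,
    show (algebraMap K (Polynomial (MvPolynomial (Fin n) K))) c
      = Polynomial.C (C c) from rfl,
    ← mul_assoc, ← Polynomial.C_mul, monomial_eq, Finsupp.prod]

variable {K : Type*} [Field K] {n : ℕ}

lemma coeff_Phi (W : Finset (Fin n)) (f : MvPolynomial (Fin n) K) (w : ℕ) :
    (Phi W f).coeff w
      = ∑ m ∈ f.support,
          if degB W m = w then monomial m (coeff m f) else 0 := by
  classical
  conv_lhs => rw [← support_sum_monomial_coeff f]
  rw [map_sum, Polynomial.finset_sum_coeff]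
  refine Finset.sum_congr rfl fun m hm => ?_
  rw [Phi_monomial, Polynomial.coeff_C_mul, Polynomial.coeff_X_pow]
  by_cases h : degB W m = w
  · rw [if_pos h, if_pos h.symm, mul_one]
  · rw [if_neg h, if_neg (fun hh => h hh.symm), mul_zero]

lemma Phi_coeff_eq_zero_iff (W : Finset (Fin n)) (f : MvPolynomial (Fin n) K) (w : ℕ) :
    (Phi W f).coeff w = 0 ↔ ∀ m ∈ f.support, degB W m ≠ w := by
  classical
  rw [coeff_Phi]
  constructor
  · intro h m0 hm0 hdeg
    have hc : coeff m0 (∑ m ∈ f.support,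
        if degB W m = w then monomial m (coeff m f) else 0) = coeff m0 f := by
      rw [MvPolynomial.coeff_sum]
      rw [Finset.sum_eq_single_of_mem m0 hm0]
      · rw [if_pos hdeg, MvPolynomial.coeff_monomial, if_pos rfl]
      · intro m hm hne
        by_cases hd : degB W m = w
        · rw [if_pos hd, MvPolynomial.coeff_monomial, if_neg hne]
        · rw [if_neg hd, MvPolynomial.coeff_zero]
    rw [h] at hc
    simp at hc
    exact Finsupp.mem_support_iff.1 hm0 hc.symm
  · intro h
    exact Finset.sum_eq_zero fun m hm => if_neg (h m hm)

lemma primary {W : Finset (Fin n)} {a : ℕ} {r x : MvPolynomial (Fin n) K}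
    (hrx : r * x ∈ (primeOf K n W) ^ a) (hx : x ∉ (primeOf K n W) ^ a) :
    r ∈ primeOf K n W := by
  classical
  by_contra hr
  have hr0 : (Phi W r).coeff 0 ≠ 0 := by
    intro h0
    apply hr
    rw [← pow_one (primeOf K n W), mem_pow_iff]
    intro m hm
    have := (Phi_coeff_eq_zero_iff W r 0).1 h0 m hm
    omega
  have hxw : ∃ w, w < a ∧ (Phi W x).coeff w ≠ 0 := by
    rw [mem_pow_iff] at hx
    push_neg at hx
    obtain ⟨m, hm, hlt⟩ := hx
    exact ⟨degB W m, hlt, fun h0 => (Phi_coeff_eq_zero_iff W x _).1 h0 m hm rfl⟩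
  have h0 := Nat.find_spec hxw
  have hcm : (Phi W (r * x)).coeff (Nat.find hxw)
      = (Phi W r).coeff 0 * (Phi W x).coeff (Nat.find hxw) := by
    rw [map_mul, Polynomial.coeff_mul,
      Finset.sum_eq_single_of_mem (0, Nat.find hxw)
        (by rw [Finset.HasAntidiagonal.mem_antidiagonal]; omega)]
    intro b hb hne
    rw [Finset.HasAntidiagonal.mem_antidiagonal] at hb
    have hb2 : b.2 < Nat.find hxw := by
      rcases Nat.lt_or_ge b.2 (Nat.find hxw) with h | h
      · exact h
      · exfalso
        apply hne
        have h2 : b.2 = Nat.find hxw := by omega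
        have h1 : b.1 = 0 := by omega
        exact Prod.ext h1 h2
    have hmin := Nat.find_min hxw hb2
    push_neg at hmin
    rw [hmin (by omega), mul_zero]
  have hz : (Phi W (r * x)).coeff (Nat.find hxw) = 0 := by
    rw [Phi_coeff_eq_zero_iff]
    intro m hm heq
    have := mem_pow_iff.1 hrx m hm
    omega
  rw [hcm] at hz
  rcases mul_eq_zero.1 hz with h | h
  · exact hr0 h
  · exact h0.2 h


variable {t : ℕ} {V : Fin t → Finset (Fin n)} {a : Fin t → ℕ}

lemma assoc_primes {K : Type*} [Field K] {n : ℕ} {t : ℕ} {V : Fin t → Finset (Fin n)}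
    {a : Fin t → ℕ}
    (hV : ∀ i, (V i).Nonempty) (ha : ∀ i, 1 ≤ a i)
    (hdisj : ∀ i j, i ≠ j → Disjoint (V i) (V j)) {p : Ideal (MvPolynomial (Fin n) K)}
    (hp : p ∈ associatedPrimes (MvPolynomial (Fin n) K)
      (MvPolynomial (Fin n) K ⧸ (∏ i, primeOf K n (V i) ^ a i))) :
    ∃ k, p = primeOf K n (V k) := by
  classical
  set I := ∏ i, primeOf K n (V i) ^ a i with hI
  obtain ⟨hprime, x, hann⟩ := isAssociatedPrime_iff.1 hp
  obtain ⟨y, rfl⟩ := Ideal.Quotient.mk_surjective x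
  have key : ∀ r, r ∈ p ↔ r * y ∈ I := by
    intro r
    rw [hann, Submodule.mem_colon_singleton, Submodule.mem_bot]
    exact Ideal.Quotient.eq_zero_iff_mem
  have hyI : y ∉ I := by
    intro h
    exact hprime.ne_top ((Ideal.eq_top_iff_one p).2 ((key 1).2 (by rwa [one_mul])))
  have hk : ∃ k, y ∉ primeOf K n (V k) ^ a k := by
    by_contra hc
    push_neg at hc
    apply hyI
    rw [hI, mem_prod_iff hdisj]
    intro m hm i
    exact mem_pow_iff.1 (hc i) m hm
  obtain ⟨k, hyk⟩ := hk
  have hle : p ≤ primeOf K n (V k) := fun r hr =>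
    primary (prod_le_pow k ((key r).1 hr)) hyk
  have hIp : I ≤ p := fun f hf => (key f).2 (Ideal.mul_mem_right y I hf)
  obtain ⟨j, _, hj⟩ := (Ideal.IsPrime.prod_le hprime).1 hIp
  have hjp : primeOf K n (V j) ≤ p := by
    have haj : a j ≠ 0 := by have := ha j; omega
    exact (Ideal.IsPrime.pow_le_iff (hP := hprime) haj).1 hj
  obtain ⟨i0, hi0⟩ := hV j
  have hi0k : i0 ∈ V k :=
    X_mem_primeOf_iff.1 (hle (hjp (X_mem_primeOf_iff.2 hi0)))
  have hjk : j = k := by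
    by_contra hne
    exact Finset.disjoint_left.1 (hdisj j k hne) hi0 hi0k
  subst hjk
  exact ⟨j, le_antisymm hle hjp⟩

end P17

/-- A product of powers of monomial primes on pairwise disjoint sets
of variables, all of the same height, is an unmixed polymatroidal ideal of degree
`Σ a_i`. -/
theorem stmt17 {K : Type*} [Field K] {n : ℕ} (hn : 0 < n)
    (t : ℕ) (ht : 1 ≤ t) (V : Fin t → Finset (Fin n)) (a : Fin t → ℕ)
    (hV : ∀ i, (V i).Nonempty) (ha : ∀ i, 1 ≤ a i)
    (hdisj : ∀ i j, i ≠ j → Disjoint (V i) (V j))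
    (hht : ∀ i j, htIdeal K n (primeOf K n (V i)) = htIdeal K n (primeOf K n (V j))) :
    IsPolymatroidal K n (∏ i, primeOf K n (V i) ^ a i) (∑ i, a i) ∧
    IsUnmixed K n (∏ i, primeOf K n (V i) ^ a i) := by
  constructor
  · refine ⟨P17.isMonomialIdeal hdisj, fun m hm => P17.minGens_deg hdisj hm, ?_⟩
    intro u hu v hv i hvi
    exact P17.exchange hdisj ha hu hv hvi
  · intro p hp q hq
    obtain ⟨k, rfl⟩ := P17.assoc_primes hV ha hdisj hp
    obtain ⟨l, rfl⟩ := P17.assoc_primes hV ha hdisj hq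
    exact hht k l
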